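/- Let 𝒮 be a finite nonempty set with probability weights w : 𝒮 → [0,1] satisfying Σ_{s∈𝒮} w_s = 1, let c > 1, and let y, g : 𝒮 → ℝ satisfy c⁻¹ ≤ y_s ≤ c and c⁻¹ ≤ g_s ≤ c for all s ∈ 𝒮. Define R = Σ_{s∈𝒮} w_s·(−y_s·log g_s + g_s) and L = Σ_{s∈𝒮} w_s·(y_s − g_s)². Then (1/(2c³))·L + (−c·log c + c⁻¹) ≤ R ≤ (c³/2)·L + (c⁻¹·log c + c). In particular the loss R majorizes and minorizes the squared loss L up to affine transformations with explicit constants depending only on c. -/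

import Mathlib

open Real Set

lemma Fmono : MonotoneOn (fun x : ℝ => Real.log x - (x - 1) + (x - 1) ^ 2 / 2) (Set.Ioi 0) := by
  apply monotoneOn_of_hasDerivWithinAt_nonneg (f' := fun x => x⁻¹ - 1 + (x - 1)) (convex_Ioi 0)
  · intro x hx
    have hx0 : (0:ℝ) < x := hx
    exact (((Real.continuousAt_log hx0.ne').sub (by fun_prop)).add (by fun_prop)).continuousWithinAt
  · intro x hx
    rw [interior_Ioi] at hx
    have h : HasDerivAt (fun x : ℝ => Real.log x - (x - 1) + (x - 1) ^ 2 / 2)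
        (x⁻¹ - 1 + (x - 1)) x := by
      have h1 := (Real.hasDerivAt_log (show x ≠ 0 from (LT.lt.ne' hx))).sub
        ((hasDerivAt_id x).sub_const 1)
      have h2 := ((((hasDerivAt_id x).sub_const 1).pow 2).div_const 2)
      exact (h1.add h2).congr_deriv (by simp)
    exact h.hasDerivWithinAt
  · intro x hx
    rw [interior_Ioi] at hx
    have hx0 : (0:ℝ) < x := hx
    have h1 : x * x⁻¹ = 1 := mul_inv_cancel₀ hx0.ne'
    nlinarith [sq_nonneg (x - 1), inv_pos.mpr hx0]

lemma Ganti : AntitoneOn (fun x : ℝ => Real.log x - (x - 1) + (x - 1) ^ 2 / (2 * x)) (Set.Ioi 0) := by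
  apply antitoneOn_of_hasDerivWithinAt_nonpos (f' := fun x => -(x-1)^2/(2*x^2)) (convex_Ioi 0)
  · intro x hx
    have hx0 : (0:ℝ) < x := hx
    apply ContinuousWithinAt.add
    · exact ((Real.continuousAt_log hx0.ne').sub (by fun_prop)).continuousWithinAt
    · exact (ContinuousAt.div (by fun_prop) (by fun_prop) (by positivity)).continuousWithinAt
  · intro x hx
    rw [interior_Ioi] at hx
    have hx0 : (0:ℝ) < x := hx
    have h : HasDerivAt (fun x : ℝ => Real.log x - (x - 1) + (x - 1) ^ 2 / (2 * x))
        (-(x-1)^2/(2*x^2)) x := by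
      have h1 := (Real.hasDerivAt_log hx0.ne').sub ((hasDerivAt_id x).sub_const 1)
      have h2 := HasDerivAt.div (((hasDerivAt_id x).sub_const 1).pow 2)
        ((hasDerivAt_id x).const_mul 2) (by positivity : (2:ℝ)*x ≠ 0)
      exact (h1.add h2).congr_deriv (by simp only [id, Pi.pow_apply]; field_simp; ring)
    exact h.hasDerivWithinAt
  · intro x hx
    rw [interior_Ioi] at hx
    have hx0 : (0:ℝ) < x := hx
    apply div_nonpos_of_nonpos_of_nonneg (neg_nonpos.mpr (sq_nonneg _)) (by positivity)

lemma log_quad_lower {x : ℝ} (hx : 1 ≤ x) : (x - 1) - (x - 1) ^ 2 / 2 ≤ Real.log x := by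
  have h := Fmono (Set.mem_Ioi.mpr one_pos) (Set.mem_Ioi.mpr (lt_of_lt_of_le one_pos hx)) hx
  simp only [Real.log_one] at h
  nlinarith [h]

lemma log_quad_lower' {x : ℝ} (hx0 : 0 < x) (hx : x ≤ 1) : Real.log x ≤ (x - 1) - (x - 1) ^ 2 / 2 := by
  have h := Fmono (Set.mem_Ioi.mpr hx0) (Set.mem_Ioi.mpr one_pos) hx
  simp only [Real.log_one] at h
  nlinarith [h]

lemma log_quad_upper {x : ℝ} (hx : 1 ≤ x) : Real.log x ≤ (x - 1) - (x - 1) ^ 2 / (2 * x) := by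
  have h := Ganti (Set.mem_Ioi.mpr one_pos) (Set.mem_Ioi.mpr (lt_of_lt_of_le one_pos hx)) hx
  simp only [Real.log_one] at h
  nlinarith [h]

lemma log_quad_upper' {x : ℝ} (hx0 : 0 < x) (hx : x ≤ 1) :
    (x - 1) - (x - 1) ^ 2 / (2 * x) ≤ Real.log x := by
  have h := Ganti (Set.mem_Ioi.mpr hx0) (Set.mem_Ioi.mpr one_pos) hx
  simp only [Real.log_one] at h
  nlinarith [h]

/-- Bregman-divergence two-sided quadratic bound. -/
lemma bregman {a b : ℝ} (ha : 0 < a) (hb : 0 < b) :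
    (a - b) ^ 2 / (2 * max a b) ≤ a * (Real.log a - Real.log b) - a + b ∧
      a * (Real.log a - Real.log b) - a + b ≤ (a - b) ^ 2 / (2 * min a b) := by
  have hxpos : 0 < b / a := div_pos hb ha
  have hlogx : Real.log (b / a) = Real.log b - Real.log a := Real.log_div hb.ne' ha.ne'
  have hD : a * (Real.log a - Real.log b) - a + b = a * ((b/a - 1) - Real.log (b/a)) := by
    rw [hlogx]; field_simp; ring
  rcases le_total a b with hab | hab
  · have hx1 : 1 ≤ b / a := (one_le_div ha).mpr hab
    have hmax : max a b = b := max_eq_right hab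
    have hmin : min a b = a := min_eq_left hab
    rw [hD, hmax, hmin]
    constructor
    · have h := log_quad_upper hx1
      have key : a * ((b/a - 1) ^ 2 / (2 * (b/a))) = (a - b) ^ 2 / (2 * b) := by
        field_simp; ring
      nlinarith [mul_le_mul_of_nonneg_left h ha.le, key]
    · have h := log_quad_lower hx1
      have key : a * ((b/a - 1) ^ 2 / 2) = (a - b) ^ 2 / (2 * a) := by
        field_simp; ring
      nlinarith [mul_le_mul_of_nonneg_left h ha.le, key]
  · have hx1 : b / a ≤ 1 := (div_le_one ha).mpr hab
    have hmax : max a b = a := max_eq_left hab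
    have hmin : min a b = b := min_eq_right hab
    rw [hD, hmax, hmin]
    constructor
    · have h := log_quad_lower' hxpos hx1
      have key : a * ((b/a - 1) ^ 2 / 2) = (a - b) ^ 2 / (2 * a) := by
        field_simp; ring
      nlinarith [mul_le_mul_of_nonneg_left h ha.le, key]
    · have h := log_quad_upper' hxpos hx1
      have key : a * ((b/a - 1) ^ 2 / (2 * (b/a))) = (a - b) ^ 2 / (2 * b) := by
        field_simp; ring
      nlinarith [mul_le_mul_of_nonneg_left h ha.le, key]

lemma pointwise {c a b : ℝ} (hc : 1 < c) (ha1 : c⁻¹ ≤ a) (ha2 : a ≤ c) (hb1 : c⁻¹ ≤ b)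
    (hb2 : b ≤ c) :
    1 / (2 * c ^ 3) * (a - b) ^ 2 + (-c * Real.log c + c⁻¹) ≤ -a * Real.log b + b ∧
      -a * Real.log b + b ≤ c ^ 3 / 2 * (a - b) ^ 2 + (c⁻¹ * Real.log c + c) := by
  have hc0 : (0:ℝ) < c := by linarith
  have hci : (0:ℝ) < c⁻¹ := inv_pos.mpr hc0
  have hci1 : c⁻¹ ≤ 1 := inv_le_one_of_one_le₀ hc.le
  have ha0 : 0 < a := lt_of_lt_of_le hci ha1
  have hb0 : 0 < b := lt_of_lt_of_le hci hb1
  have hlc : 0 ≤ Real.log c := Real.log_nonneg hc.le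
  have hdecomp : -a * Real.log b + b
      = (a - a * Real.log a) + (a * (Real.log a - Real.log b) - a + b) := by ring
  -- bounds on a - a log a
  have flow : c⁻¹ - c * Real.log c ≤ a - a * Real.log a := by
    rcases le_total 1 a with h1 | h1
    · have hla : 0 ≤ Real.log a := Real.log_nonneg h1
      have hlac : Real.log a ≤ Real.log c := Real.log_le_log (by linarith) ha2
      nlinarith
    · have hla : Real.log a ≤ 0 := Real.log_nonpos ha0.le h1
      nlinarith
  have fhigh : a - a * Real.log a ≤ c := by
    rcases le_total 1 a with h1 | h1
    · have hla : 0 ≤ Real.log a := Real.log_nonneg h1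
      nlinarith
    · have h := Real.log_le_sub_one_of_pos (inv_pos.mpr ha0)
      rw [Real.log_inv] at h
      have haa : a * a⁻¹ = 1 := mul_inv_cancel₀ ha0.ne'
      nlinarith
  -- Bregman bounds
  obtain ⟨hBl, hBu⟩ := bregman ha0 hb0
  have hmaxc : max a b ≤ c := max_le ha2 hb2
  have hminc : c⁻¹ ≤ min a b := le_min ha1 hb1
  have hmax0 : 0 < max a b := lt_max_of_lt_left ha0
  have hmin0 : 0 < min a b := lt_min ha0 hb0
  have hcc3 : c ≤ c ^ 3 := by nlinarith [sq_nonneg (c - 1), sq_nonneg (c + 1)]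
  have hl2 : (a - b) ^ 2 / (2 * c ^ 3) ≤ (a - b) ^ 2 / (2 * max a b) := by
    apply div_le_div_of_nonneg_left (sq_nonneg _) (by linarith)
    nlinarith
  have hu2 : (a - b) ^ 2 / (2 * min a b) ≤ c ^ 3 / 2 * (a - b) ^ 2 := by
    have h1 : (a - b) ^ 2 / (2 * min a b) ≤ (a - b) ^ 2 / (2 * c⁻¹) := by
      apply div_le_div_of_nonneg_left (sq_nonneg _) (by linarith)
      linarith
    have h2 : (a - b) ^ 2 / (2 * c⁻¹) = c / 2 * (a - b) ^ 2 := by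
      field_simp
    nlinarith [sq_nonneg (a - b)]
  constructor
  · have : 1 / (2 * c ^ 3) * (a - b) ^ 2 = (a - b) ^ 2 / (2 * c ^ 3) := by ring
    rw [hdecomp, this]
    linarith
  · have hlcc : 0 ≤ c⁻¹ * Real.log c := by positivity
    rw [hdecomp]
    linarith


/-- The generalized-I-divergence-type loss `R` majorizes and minorizes the squared loss `L`
up to affine transformations with explicit constants depending only on `c`
(paper's Proposition 3.3, with expectations written as weighted finite sums). -/
theorem loss_equivalent_to_squared_loss {S : Type*} [Fintype S] [Nonempty S]
    (w : S → ℝ) (hw : ∀ s, w s ∈ Set.Icc (0 : ℝ) 1) (hsum : ∑ s, w s = 1)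
    (c : ℝ) (hc : 1 < c) (y g : S → ℝ)
    (hy : ∀ s, c⁻¹ ≤ y s ∧ y s ≤ c) (hg : ∀ s, c⁻¹ ≤ g s ∧ g s ≤ c) :
    (1 / (2 * c ^ 3)) * (∑ s, w s * (y s - g s) ^ 2) + (-c * Real.log c + c⁻¹)
        ≤ ∑ s, w s * (-y s * Real.log (g s) + g s) ∧
      ∑ s, w s * (-y s * Real.log (g s) + g s)
        ≤ (c ^ 3 / 2) * (∑ s, w s * (y s - g s) ^ 2) + (c⁻¹ * Real.log c + c) := by
  have hpt : ∀ s : S,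
      1 / (2 * c ^ 3) * (y s - g s) ^ 2 + (-c * Real.log c + c⁻¹) ≤ -y s * Real.log (g s) + g s ∧
        -y s * Real.log (g s) + g s
          ≤ c ^ 3 / 2 * (y s - g s) ^ 2 + (c⁻¹ * Real.log c + c) :=
    fun s => pointwise hc (hy s).1 (hy s).2 (hg s).1 (hg s).2
  constructor
  · have e1 : ∑ s, w s * (1 / (2 * c ^ 3) * (y s - g s) ^ 2 + (-c * Real.log c + c⁻¹))
        = (1 / (2 * c ^ 3)) * (∑ s, w s * (y s - g s) ^ 2)
          + (-c * Real.log c + c⁻¹) * ∑ s, w s := by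
      rw [Finset.mul_sum, Finset.mul_sum, ← Finset.sum_add_distrib]
      exact Finset.sum_congr rfl fun s _ => by ring
    have e2 := Finset.sum_le_sum (s := Finset.univ)
      (fun s _ => mul_le_mul_of_nonneg_left (hpt s).1 (hw s).1)
    rw [e1, hsum, mul_one] at e2
    exact e2
  · have e1 : ∑ s, w s * (c ^ 3 / 2 * (y s - g s) ^ 2 + (c⁻¹ * Real.log c + c))
        = (c ^ 3 / 2) * (∑ s, w s * (y s - g s) ^ 2)
          + (c⁻¹ * Real.log c + c) * ∑ s, w s := by
      rw [Finset.mul_sum, Finset.mul_sum, ← Finset.sum_add_distrib]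
      exact Finset.sum_congr rfl fun s _ => by ring
    have e2 := Finset.sum_le_sum (s := Finset.univ)
      (fun s _ => mul_le_mul_of_nonneg_left (hpt s).2 (hw s).1)
    rw [e1, hsum, mul_one] at e2
    exact e2
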